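/- (Cassels) Let K be a number field with ring of integers O_K, k > 0, T a compact subset of the mixed space E, and ε ∈ O_K^× a unit of infinite order such that |ι(ε)|_j ≠ 1 for every index 1 ≤ j ≤ r₁+r₂. Suppose: (1) there exists β ∈ O_K such that for every ξ ∈ T, either there exists γ ∈ O_K with N(ι(ε)·ξ − ι(β) − ι(γ)) < k, or ι(ε)·ξ − ι(β) ∈ T; and (2) for every ξ ∈ T there exists γ ∈ O_K such that either N(ι(ε)⁻¹·ξ − ι(γ) − ι(δ)) < k for some δ ∈ O_K, or ι(ε)⁻¹·ξ − ι(γ) ∈ T. Then every k-exceptional point of T equals ι(β)/(ι(ε)−1) (the componentwise quotient in E). -/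

import Mathlib

open NumberField NumberField.InfinitePlace

/-- (Cassels) If multiplication by `ι ε` (after translation by `-ι β`) and
multiplication by `ι ε⁻¹` (after a suitable translation) both send every point
of the compact set `T` into a `k`-covered region or back into `T`, and no
archimedean absolute value of `ε` equals `1`, then the only possible
`k`-exceptional point of `T` is `ι β / (ι ε - 1)`. -/
theorem stmt_3 (K : Type*) [Field K] [NumberField K]
    (k : ℝ) (hk : 0 < k)
    (T : Set (mixedEmbedding.mixedSpace K)) (hT : IsCompact T)
    (ε : (𝓞 K)ˣ) (hε : ¬ IsOfFinOrder ε)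
    (hεabs : (∀ w : {w : InfinitePlace K // IsReal w},
        |(mixedEmbedding K (ε : K)).1 w| ≠ 1) ∧
      (∀ w : {w : InfinitePlace K // IsComplex w},
        ‖(mixedEmbedding K (ε : K)).2 w‖ ≠ 1))
    (β : 𝓞 K)
    (h1 : ∀ ξ ∈ T,
      (∃ γ : 𝓞 K, mixedEmbedding.norm
          (mixedEmbedding K (ε : K) * ξ - mixedEmbedding K (β : K)
            - mixedEmbedding K (γ : K)) < k) ∨
      mixedEmbedding K (ε : K) * ξ - mixedEmbedding K (β : K) ∈ T)
    (h2 : ∀ ξ ∈ T, ∃ γ : 𝓞 K,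
      (∃ δ : 𝓞 K, mixedEmbedding.norm
          (mixedEmbedding K ((ε⁻¹ : (𝓞 K)ˣ) : K) * ξ - mixedEmbedding K (γ : K)
            - mixedEmbedding K (δ : K)) < k) ∨
      mixedEmbedding K ((ε⁻¹ : (𝓞 K)ˣ) : K) * ξ - mixedEmbedding K (γ : K) ∈ T)
    (ξ₀ : mixedEmbedding.mixedSpace K) (hξ₀ : ξ₀ ∈ T)
    (hexc : ∀ γ : 𝓞 K, k ≤ mixedEmbedding.norm (ξ₀ - mixedEmbedding K (γ : K))) :
    ξ₀ = mixedEmbedding K (β : K) / (mixedEmbedding K (ε : K) - 1) := by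
  classical
  set Exc : mixedEmbedding.mixedSpace K → Prop :=
    fun ξ => ∀ γ : 𝓞 K, k ≤ mixedEmbedding.norm (ξ - mixedEmbedding K (γ : K)) with hExc
  -- basic facts
  have hnp_le : ∀ (w : InfinitePlace K) (x : mixedEmbedding.mixedSpace K),
      mixedEmbedding.normAtPlace w x ≤ ‖x‖ := by
    intro w x
    rw [mixedEmbedding.norm_eq_sup'_normAtPlace]
    exact Finset.le_sup' (fun w => mixedEmbedding.normAtPlace w x) (Finset.mem_univ w)
  have hw_ne : ∀ w : InfinitePlace K, w (ε : K) ≠ 1 := by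
    intro w
    rcases isReal_or_isComplex w with hw | hw
    · have := hεabs.1 ⟨w, hw⟩
      rwa [← Real.norm_eq_abs, ← mixedEmbedding.normAtPlace_apply_of_isReal hw,
        mixedEmbedding.normAtPlace_apply] at this
    · have := hεabs.2 ⟨w, hw⟩
      rwa [← mixedEmbedding.normAtPlace_apply_of_isComplex hw,
        mixedEmbedding.normAtPlace_apply] at this
  have hεK : (ε : K) ≠ 0 := NumberField.Units.coe_ne_zero ε
  have hwpos : ∀ w : InfinitePlace K, 0 < w (ε : K) := fun w => pos_iff.mpr hεK
  -- existence of a place where `w ε > 1`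
  have hex_gt : ∃ w : InfinitePlace K, 1 < w (ε : K) := by
    by_contra h
    push_neg at h
    have hlt : ∀ w : InfinitePlace K, w (ε : K) < 1 := fun w => (h w).lt_of_ne (hw_ne w)
    have hprod : ∏ w : InfinitePlace K, (w (ε : K)) ^ mult w = 1 := by
      rw [prod_eq_abs_norm, NumberField.Units.norm]
      norm_num
    have : ∏ w : InfinitePlace K, (w (ε : K)) ^ mult w < 1 := by
      rw [show (1 : ℝ) = ∏ _w : InfinitePlace K, 1 by simp]
      refine Finset.prod_lt_prod_of_nonempty (fun w _ => pow_pos (hwpos w) _)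
        (fun w _ => pow_lt_one₀ (hwpos w).le (hlt w) mult_ne_zero) Finset.univ_nonempty
    rw [hprod] at this
    exact lt_irrefl _ this
  -- `(ι ε - 1) * b = ι β`
  have hcomp1 : ∀ w, (mixedEmbedding K (ε : K)).1 w - 1 ≠ 0 := by
    intro w h
    rw [sub_eq_zero] at h
    exact hεabs.1 w (by rw [h]; simp)
  have hcomp2 : ∀ w, (mixedEmbedding K (ε : K)).2 w - 1 ≠ 0 := by
    intro w h
    rw [sub_eq_zero] at h
    exact hεabs.2 w (by rw [h]; simp)
  have hbb : (mixedEmbedding K (ε : K) - 1) *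
      (mixedEmbedding K (β : K) / (mixedEmbedding K (ε : K) - 1))
        = mixedEmbedding K (β : K) := by
    refine Prod.ext ?_ ?_
    · funext w
      simp only [Prod.fst_mul, Prod.fst_sub, Prod.fst_div, Prod.fst_one, Pi.mul_apply,
        Pi.sub_apply, Pi.div_apply, Pi.one_apply]
      rw [mul_comm, div_mul_cancel₀ _ (hcomp1 w)]
    · funext w
      simp only [Prod.snd_mul, Prod.snd_sub, Prod.snd_div, Prod.snd_one, Pi.mul_apply,
        Pi.sub_apply, Pi.div_apply, Pi.one_apply]
      rw [mul_comm, div_mul_cancel₀ _ (hcomp2 w)]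
  set b : mixedEmbedding.mixedSpace K :=
    mixedEmbedding K (β : K) / (mixedEmbedding K (ε : K) - 1) with hbdef
  have hinv : mixedEmbedding K (ε : K) * mixedEmbedding K (((ε⁻¹ : (𝓞 K)ˣ) : 𝓞 K) : K) = 1 := by
    rw [← map_mul]
    norm_cast
    simp
  -- exceptionality is preserved by unit multiplication and integer translation
  have key_norm : ∀ (u : (𝓞 K)ˣ) (a : 𝓞 K) (ξ : mixedEmbedding.mixedSpace K), Exc ξ →
      ∀ γ : 𝓞 K, k ≤ mixedEmbedding.norm
        (mixedEmbedding K (u : K) * ξ - mixedEmbedding K (a : K)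
          - mixedEmbedding K (γ : K)) := by
    intro u a ξ hξ γ
    have hco : ((((u⁻¹ : (𝓞 K)ˣ) : 𝓞 K) * (a + γ) : 𝓞 K) : K)
        = (((u⁻¹ : (𝓞 K)ˣ) : 𝓞 K) : K) * ((a : K) + (γ : K)) := by push_cast; ring
    have huu : mixedEmbedding K (u : K) *
        mixedEmbedding K (((u⁻¹ : (𝓞 K)ˣ) : 𝓞 K) : K) = 1 := by
      rw [← map_mul]; norm_cast; simp
    have heq : mixedEmbedding K (u : K) * ξ - mixedEmbedding K (a : K)
          - mixedEmbedding K (γ : K)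
        = mixedEmbedding K (u : K) * (ξ -
            mixedEmbedding K (((((u⁻¹ : (𝓞 K)ˣ) : 𝓞 K) * (a + γ) : 𝓞 K)) : K)) := by
      rw [hco, map_mul, map_add]
      linear_combination (mixedEmbedding K (a : K) + mixedEmbedding K (γ : K)) * huu
    rw [heq, map_mul, mixedEmbedding.norm_unit u, one_mul]
    exact hξ _
  -- forward step
  have step1 : ∀ ξ ∈ T, Exc ξ →
      (mixedEmbedding K (ε : K) * ξ - mixedEmbedding K (β : K) ∈ T ∧
        Exc (mixedEmbedding K (ε : K) * ξ - mixedEmbedding K (β : K))) := by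
    intro ξ hmem hexξ
    refine ⟨(h1 ξ hmem).resolve_left ?_, key_norm ε β ξ hexξ⟩
    push_neg
    intro γ
    exact key_norm ε β ξ hexξ γ
  -- backward step
  have step2 : ∀ ξ ∈ T, Exc ξ → ∃ γ : 𝓞 K,
      (mixedEmbedding K (((ε⁻¹ : (𝓞 K)ˣ) : 𝓞 K) : K) * ξ - mixedEmbedding K (γ : K) ∈ T ∧
        Exc (mixedEmbedding K (((ε⁻¹ : (𝓞 K)ˣ) : 𝓞 K) : K) * ξ - mixedEmbedding K (γ : K))) := by
    intro ξ hmem hexξ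
    obtain ⟨γ, hγ⟩ := h2 ξ hmem
    refine ⟨γ, hγ.resolve_left ?_, key_norm ε⁻¹ γ ξ hexξ⟩
    push_neg
    intro δ
    exact key_norm ε⁻¹ γ ξ hexξ δ
  -- boundedness of T
  obtain ⟨M, hM⟩ : ∃ M, ∀ x ∈ T, ‖x‖ ≤ M := isBounded_iff_forall_norm_le.mp hT.isBounded
  have hgen : ∀ p ∈ T, ∀ w : InfinitePlace K,
      mixedEmbedding.normAtPlace w (p - b) ≤ M + ‖b‖ := by
    intro p hp w
    rw [sub_eq_add_neg]
    calc mixedEmbedding.normAtPlace w (p + (-b))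
        ≤ mixedEmbedding.normAtPlace w p + mixedEmbedding.normAtPlace w (-b) :=
          mixedEmbedding.normAtPlace_add_le w _ _
      _ ≤ M + ‖b‖ := by
          rw [mixedEmbedding.normAtPlace_neg]
          exact add_le_add ((hnp_le w p).trans (hM p hp)) (hnp_le w b)
  -- forward orbit
  have fwd : ∀ ξ, ξ ∈ T → Exc ξ → ∀ m : ℕ,
      ((mixedEmbedding K (ε : K)) ^ m * (ξ - b) + b ∈ T ∧
        Exc ((mixedEmbedding K (ε : K)) ^ m * (ξ - b) + b)) := by
    intro ξ hmem hexξ m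
    induction m with
    | zero => simpa using ⟨hmem, hexξ⟩
    | succ m ih =>
      have := step1 _ ih.1 ih.2
      have heq : mixedEmbedding K (ε : K) *
            ((mixedEmbedding K (ε : K)) ^ m * (ξ - b) + b) - mixedEmbedding K (β : K)
          = (mixedEmbedding K (ε : K)) ^ (m + 1) * (ξ - b) + b := by
        linear_combination hbb
      rw [heq] at this
      exact this
  -- vanishing at expanding places
  have hzero_gt : ∀ ξ, ξ ∈ T → Exc ξ → ∀ w : InfinitePlace K, 1 < w (ε : K) →
      mixedEmbedding.normAtPlace w (ξ - b) = 0 := by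
    intro ξ hmem hexξ w hw
    by_contra hne
    have hpos : 0 < mixedEmbedding.normAtPlace w (ξ - b) :=
      (mixedEmbedding.normAtPlace_nonneg w _).lt_of_ne (Ne.symm hne)
    have hbound : ∀ m : ℕ,
        (w (ε : K)) ^ m * mixedEmbedding.normAtPlace w (ξ - b) ≤ M + ‖b‖ := by
      intro m
      calc (w (ε : K)) ^ m * mixedEmbedding.normAtPlace w (ξ - b)
          = mixedEmbedding.normAtPlace w ((mixedEmbedding K (ε : K)) ^ m * (ξ - b)) := by
            rw [map_mul, map_pow, mixedEmbedding.normAtPlace_apply]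
        _ = mixedEmbedding.normAtPlace w
              (((mixedEmbedding K (ε : K)) ^ m * (ξ - b) + b) - b) := by
            rw [show ((mixedEmbedding K (ε : K)) ^ m * (ξ - b) + b) - b
              = (mixedEmbedding K (ε : K)) ^ m * (ξ - b) from by ring]
        _ ≤ M + ‖b‖ := hgen _ (fwd ξ hmem hexξ m).1 w
    obtain ⟨m, hm⟩ := pow_unbounded_of_one_lt
      ((M + ‖b‖) / mixedEmbedding.normAtPlace w (ξ - b)) hw
    have := hbound m
    rw [div_lt_iff₀ hpos] at hm
    linarith
  -- backward orbit via choice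
  have next : ∀ s : {ξ : mixedEmbedding.mixedSpace K // ξ ∈ T ∧ Exc ξ},
      ∃ t : {ξ : mixedEmbedding.mixedSpace K // ξ ∈ T ∧ Exc ξ},
      ∃ γ : 𝓞 K, (t : mixedEmbedding.mixedSpace K)
        = mixedEmbedding K (((ε⁻¹ : (𝓞 K)ˣ) : 𝓞 K) : K) * (s : mixedEmbedding.mixedSpace K)
          - mixedEmbedding K (γ : K) := by
    intro s
    obtain ⟨γ, hmem, hexs⟩ := step2 s s.2.1 s.2.2
    exact ⟨⟨_, hmem, hexs⟩, γ, rfl⟩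
  choose f g hf using next
  set η : ℕ → {ξ : mixedEmbedding.mixedSpace K // ξ ∈ T ∧ Exc ξ} :=
    fun n => f^[n] ⟨ξ₀, hξ₀, hexc⟩ with hη
  have hηsucc : ∀ n, η (n + 1) = f (η n) := by
    intro n
    simp [hη, Function.iterate_succ_apply']
  set c : ℕ → mixedEmbedding.mixedSpace K := fun n => (η n : mixedEmbedding.mixedSpace K) - b
    with hcdef
  -- the recursion `c n = ι ε * c (n+1)`
  have hrec : ∀ n, c n = mixedEmbedding K (ε : K) * c (n + 1) := by
    intro n
    obtain ⟨γ, hγ⟩ : ∃ γ : 𝓞 K, (η (n+1) : mixedEmbedding.mixedSpace K)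
        = mixedEmbedding K (((ε⁻¹ : (𝓞 K)ˣ) : 𝓞 K) : K) * (η n : mixedEmbedding.mixedSpace K)
          - mixedEmbedding K (γ : K) := by
      rw [hηsucc n]
      exact ⟨g (η n), hf (η n)⟩
    have hηn : (η n : mixedEmbedding.mixedSpace K)
        = mixedEmbedding K (ε : K) * (η (n+1) : mixedEmbedding.mixedSpace K)
          + mixedEmbedding K (ε : K) * mixedEmbedding K (γ : K) := by
      rw [hγ]
      linear_combination (-(η n : mixedEmbedding.mixedSpace K)) * hinv
    set m : 𝓞 K := β + (ε : 𝓞 K) * γ with hm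
    have hιm : mixedEmbedding K (m : K)
        = mixedEmbedding K (β : K) + mixedEmbedding K (ε : K) * mixedEmbedding K (γ : K) := by
      rw [hm]
      push_cast
      rw [map_add, map_mul]
    have hmain : c n = mixedEmbedding K (ε : K) * c (n + 1) + mixedEmbedding K (m : K) := by
      simp only [hcdef]
      rw [hιm, hηn]
      linear_combination hbb
    -- show `ι m = 0` using the expanding place
    obtain ⟨w₀, hw₀⟩ := hex_gt
    have hz1 : mixedEmbedding.normAtPlace w₀ (c n) = 0 :=
      hzero_gt _ (η n).2.1 (η n).2.2 w₀ hw₀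
    have hz2 : mixedEmbedding.normAtPlace w₀ (c (n+1)) = 0 :=
      hzero_gt _ (η (n+1)).2.1 (η (n+1)).2.2 w₀ hw₀
    have hz3 : mixedEmbedding.normAtPlace w₀ (mixedEmbedding K (m : K)) = 0 := by
      have heq : mixedEmbedding K (m : K)
          = c n + (-(mixedEmbedding K (ε : K) * c (n + 1))) := by
        rw [hmain]; ring
      have : mixedEmbedding.normAtPlace w₀ (mixedEmbedding K (m : K))
          ≤ mixedEmbedding.normAtPlace w₀ (c n)
            + mixedEmbedding.normAtPlace w₀ (-(mixedEmbedding K (ε : K) * c (n + 1))) := by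
        rw [heq]
        exact mixedEmbedding.normAtPlace_add_le w₀ _ _
      rw [hz1, mixedEmbedding.normAtPlace_neg, map_mul, hz2, mul_zero, zero_add] at this
      exact le_antisymm this (mixedEmbedding.normAtPlace_nonneg _ _)
    have hm0 : mixedEmbedding K (m : K) = 0 := by
      have hnorm0 : mixedEmbedding.norm (mixedEmbedding K (m : K)) = 0 :=
        mixedEmbedding.norm_eq_zero_iff.mpr ⟨w₀, hz3⟩
      exact (mixedEmbedding.norm_eq_zero_iff' ⟨(m : K), rfl⟩).mp hnorm0
    rw [hmain, hm0, add_zero]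
  have hcn : ∀ n : ℕ, c 0 = (mixedEmbedding K (ε : K)) ^ n * c n := by
    intro n
    induction n with
    | zero => simp
    | succ n ih =>
      rw [ih, hrec n, pow_succ]
      ring
  -- conclude
  have hzero : ξ₀ - b = 0 := by
    have hc0 : c 0 = ξ₀ - b := by simp [hcdef, hη]
    rw [← hc0]
    rw [← mixedEmbedding.forall_normAtPlace_eq_zero_iff]
    intro w
    rcases lt_or_gt_of_ne (hw_ne w) with hlt | hgt
    · -- contracting place: use the backward orbit
      have hb : ∀ n : ℕ, mixedEmbedding.normAtPlace w (c 0) ≤ (w (ε : K)) ^ n * (M + ‖b‖) := by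
        intro n
        rw [hcn n, map_mul, map_pow, mixedEmbedding.normAtPlace_apply]
        exact mul_le_mul_of_nonneg_left (hgen _ (η n).2.1 w) (pow_nonneg (hwpos w).le n)
      have htend : Filter.Tendsto (fun n : ℕ => (w (ε : K)) ^ n * (M + ‖b‖))
          Filter.atTop (nhds 0) := by
        rw [show (0 : ℝ) = 0 * (M + ‖b‖) by ring]
        exact (tendsto_pow_atTop_nhds_zero_of_lt_one (hwpos w).le hlt).mul_const _
      have hle : mixedEmbedding.normAtPlace w (c 0) ≤ 0 := ge_of_tendsto' htend hb
      exact le_antisymm hle (mixedEmbedding.normAtPlace_nonneg _ _)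
    · rw [hc0]
      exact hzero_gt ξ₀ hξ₀ hexc w hgt
  rw [sub_eq_zero] at hzero
  exact hzero
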